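/- Let G be an abelian group with a distinguished 'torsion' subgroup Tor(G) (the set of elements of finite order), and let ĥ : G → ℝ be nonnegative with ĥ(x) = 0 if and only if x ∈ Tor(G), satisfying the parallelogram law and ĥ(n•x) = n²ĥ(x). Let σ₁, σ₂ be ĥ-preserving automorphisms of G, P ∈ G a non-torsion element, and c > 2 an integer. Then Q = σ₂(P) − σ₁(P) − c•P is not a torsion element of G. -/

import Mathlib

theorem stmt_15 (G : Type*) [AddCommGroup G] (h : G → ℝ)
    (hnonneg : ∀ x, 0 ≤ h x)
    (hzero : ∀ x : G, h x = 0 ↔ IsOfFinAddOrder x)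
    (hpar : ∀ x y, h (x - y) + h (x + y) = 2 * h x + 2 * h y)
    (hhom : ∀ (n : ℤ) (x : G), h (n • x) = (n : ℝ) ^ 2 * h x)
    (σ₁ σ₂ : G ≃+ G) (hσ₁ : ∀ v, h (σ₁ v) = h v) (hσ₂ : ∀ v, h (σ₂ v) = h v)
    (P : G) (hP : ¬ IsOfFinAddOrder P) (c : ℤ) (hc : 2 < c) :
    ¬ IsOfFinAddOrder (σ₂ P - σ₁ P - c • P) := by
  intro hQ
  set t := h P with ht
  have htpos : 0 < t := by
    rcases lt_or_eq_of_le (hnonneg P) with h1 | h1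
    · exact h1
    · exact absurd ((hzero P).mp h1.symm) hP
  set w : G := σ₂ P - σ₁ P with hw
  have hQ0 : h (w - c • P) = 0 := (hzero _).mpr hQ
  have hwle : h w ≤ 4 * t := by
    have := hpar (σ₂ P) (σ₁ P)
    rw [hσ₁, hσ₂] at this
    have h2 := hnonneg (σ₂ P + σ₁ P)
    linarith
  set f : ℤ → ℝ := fun n => h (w + n • P) with hf
  set B : ℝ := f 1 - t - h w with hB
  have hrec : ∀ n : ℤ, f (n - 1) + f (n + 1) = 2 * f n + 2 * t := by
    intro n
    have := hpar (w + n • P) P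
    have e1 : w + n • P - P = w + (n - 1) • P := by
      rw [sub_smul, one_smul]; abel
    have e2 : w + n • P + P = w + (n + 1) • P := by
      rw [add_smul, one_smul]; abel
    rw [e1, e2] at this
    simpa using this
  have hquad : ∀ n : ℤ, f n = t * (n : ℝ) ^ 2 + B * (n : ℝ) + h w := by
    have key : ∀ n : ℤ, (f n = t * (n : ℝ) ^ 2 + B * (n : ℝ) + h w) ∧
        (f (n + 1) = t * ((n : ℝ) + 1) ^ 2 + B * ((n : ℝ) + 1) + h w) := by
      intro n
      induction n using Int.induction_on with
      | zero =>
        constructor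
        · simp [hf]
        · simp only [zero_add, Int.cast_zero]; rw [hB]; ring
      | succ k ih =>
        have h1 := ih.1
        have h2 := ih.2
        have hr := hrec (k + 1)
        simp only [add_sub_cancel_right] at hr
        constructor
        · push_cast at h2 ⊢; linarith
        · push_cast at h1 h2 hr ⊢; nlinarith [hr, h1, h2]
      | pred k ih =>
        have h1 := ih.1
        have h2 := ih.2
        have hr := hrec (-k)
        have e : (-(k:ℤ) - 1) = -((k:ℤ) + 1) := by ring
        rw [e] at hr
        have e2 : (-(k:ℤ) + 1) = -(k:ℤ) + 1 := rfl
        constructor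
        · rw [show (-(k:ℤ) - 1) = -((k:ℤ) + 1) from by ring]
          push_cast at h1 h2 hr ⊢; nlinarith [hr, h1, h2]
        · rw [show (-(k:ℤ) - 1 + 1) = -(k:ℤ) from by ring]
          push_cast at h1 ⊢; linarith
    exact fun n => (key n).1
  have hfc : f (-c) = 0 := by
    have e : w + (-c) • P = w - c • P := by rw [neg_smul]; abel
    show h (w + (-c) • P) = 0
    rw [e, hQ0]
  have h1 : t * (-(c : ℝ)) ^ 2 + B * (-(c : ℝ)) + h w = 0 := by
    have := hquad (-c); rw [hfc] at this; push_cast at this; linarith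
  have h2 : 0 ≤ t * (-(c : ℝ) + 1) ^ 2 + B * (-(c : ℝ) + 1) + h w := by
    have e := hquad (-c + 1)
    have hn := hnonneg (w + (-c + 1) • P)
    rw [show h (w + (-c + 1) • P) = f (-c + 1) from rfl, e] at hn
    push_cast at hn; linarith
  have h3 : 0 ≤ t * (-2 : ℝ) ^ 2 + B * (-2 : ℝ) + h w := by
    have e := hquad (-2)
    have hn := hnonneg (w + (-2 : ℤ) • P)
    rw [show h (w + (-2 : ℤ) • P) = f (-2) from rfl, e] at hn
    push_cast at hn; linarith
  have hc3 : (3 : ℝ) ≤ (c : ℝ) := by exact_mod_cast hc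
  nlinarith [h1, h2, h3, hwle, htpos, hc3,
    mul_nonneg htpos.le (by linarith : (0:ℝ) ≤ (c:ℝ) - 3)]
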